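/- Let A be an n×n complex positive semidefinite matrix with eigenvalues λ_1(A) ≥ λ_2(A) ≥ ... ≥ λ_n(A) and let u_1, ..., u_n be corresponding orthonormal eigenvectors. Let 1 ≤ i_1 < i_2 < ... < i_k ≤ n be indices and let x_1, ..., x_k be orthonormal vectors in ℂ^n such that x_t lies in the span of u_1, ..., u_{i_t} for each t = 1, ..., k. If U_k = (x_1, ..., x_k) is the n×k matrix with columns x_1, ..., x_k, then det(U_k* A U_k) ≥ ∏_{t=1}^k λ_{i_t}(A). -/

import Mathlib

open Matrix Finset Equiv Function

variable {R : Type*} [CommRing R] {k n : ℕ}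

private theorem my_det_mul_aux {M : Matrix (Fin k) (Fin n) R} {N : Matrix (Fin n) (Fin k) R}
    {p : Fin k → Fin n} (H : ¬Function.Injective p) :
    (∑ σ : Perm (Fin k), ((Perm.sign σ : ℤ) : R) * ∏ x, M (σ x) (p x) * N (p x) x) = 0 := by
  obtain ⟨i, j, hpij, hij⟩ : ∃ i j, p i = p j ∧ i ≠ j := by
    rw [Function.Injective] at H
    push_neg at H
    exact H
  exact
    sum_involution (fun σ _ => σ * Equiv.swap i j)
      (fun σ _ => by
        have : (∏ x, M (σ x) (p x)) = ∏ x, M ((σ * Equiv.swap i j) x) (p x) :=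
          Fintype.prod_equiv (swap i j) _ _ (by simp [Equiv.apply_swap_eq_self hpij])
        simp [this, Equiv.Perm.sign_swap hij, -Perm.sign_swap', prod_mul_distrib])
      (fun σ _ _ => (not_congr Equiv.mul_swap_eq_iff).mpr hij) (fun _ _ => mem_univ _) fun σ _ =>
      Equiv.mul_swap_involutive i j σ

open scoped Classical in
private theorem det_mul_expand (M : Matrix (Fin k) (Fin n) R) (N : Matrix (Fin n) (Fin k) R) :
    (M * N).det = ∑ p ∈ Finset.univ.filter (fun p : Fin k → Fin n => Function.Injective p),
      ∑ σ : Perm (Fin k), ((Perm.sign σ : ℤ) : R) * ∏ x, M (σ x) (p x) * N (p x) x := by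
  have h1 : (M * N).det = ∑ p : Fin k → Fin n,
      ∑ σ : Perm (Fin k), ((Perm.sign σ : ℤ) : R) * ∏ x, M (σ x) (p x) * N (p x) x := by
    simp only [det_apply', mul_apply, prod_univ_sum, mul_sum, Fintype.piFinset_univ]
    rw [Finset.sum_comm]
  rw [h1]
  refine (sum_subset (filter_subset _ _) fun f _ hinj => my_det_mul_aux ?_).symm
  simpa only [true_and, mem_filter, mem_univ] using hinj

open scoped Classical in
private theorem det_mul_perm (A B : Matrix (Fin k) (Fin k) R) :
    (A * B).det = ∑ τ : Perm (Fin k),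
      ∑ σ : Perm (Fin k), ((Perm.sign σ : ℤ) : R) * ∏ x, A (σ x) (τ x) * B (τ x) x := by
  rw [det_mul_expand]
  exact Finset.sum_bij
    (fun p h => Equiv.ofBijective p
      (Finite.injective_iff_bijective.mp (Finset.mem_filter.1 h).2))
    (fun _ _ => mem_univ _) (fun _ _ _ _ h => by injection h)
    (fun b _ => ⟨b, Finset.mem_filter.2 ⟨mem_univ _, b.injective⟩, Equiv.coe_fn_injective rfl⟩)
    (fun _ _ => rfl)

open scoped Classical in
/-- Cauchy–Binet. -/
theorem det_mul_rect (M : Matrix (Fin k) (Fin n) R) (N : Matrix (Fin n) (Fin k) R) :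
    (M * N).det = ∑ g ∈ Finset.univ.filter (fun g : Fin k → Fin n => StrictMono g),
      (M.submatrix id g).det * (N.submatrix g id).det := by
  have hcard : ∀ (p : Fin k → Fin n), Function.Injective p →
      (Finset.image p Finset.univ).card = k := fun p hp => by
    rw [Finset.card_image_of_injective _ hp, Finset.card_univ, Fintype.card_fin]
  rw [det_mul_expand]
  have step1 : (∑ p ∈ Finset.univ.filter (fun p : Fin k → Fin n => Function.Injective p),
      ∑ σ : Perm (Fin k), ((Perm.sign σ : ℤ) : R) * ∏ x, M (σ x) (p x) * N (p x) x)
      = ∑ q ∈ (Finset.univ.filter (fun g : Fin k → Fin n => StrictMono g)) ×ˢ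
          (Finset.univ : Finset (Perm (Fin k))),
        ∑ σ : Perm (Fin k), ((Perm.sign σ : ℤ) : R) *
          ∏ x, M (σ x) ((q.1 ∘ ⇑q.2) x) * N ((q.1 ∘ ⇑q.2) x) x := by
    refine Finset.sum_bij'
      (i := fun p hp =>
        (⇑((Finset.image p Finset.univ).orderEmbOfFin
            (hcard p (Finset.mem_filter.1 hp).2)),
          Equiv.ofBijective
            (fun t => ((Finset.image p Finset.univ).orderIsoOfFin
                (hcard p (Finset.mem_filter.1 hp).2)).symm
              ⟨p t, Finset.mem_image_of_mem p (Finset.mem_univ t)⟩)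
            (Finite.injective_iff_bijective.mp (fun a b hab => by
               have h2 := Subtype.ext_iff.mp
                 (((Finset.image p Finset.univ).orderIsoOfFin
                    (hcard p (Finset.mem_filter.1 hp).2)).symm.injective hab)
               exact (Finset.mem_filter.1 hp).2 h2))))
      (j := fun q _ => q.1 ∘ ⇑q.2) ?_ ?_ ?_ ?_ ?_
    · intro p hp
      exact Finset.mem_product.2 ⟨Finset.mem_filter.2 ⟨Finset.mem_univ _,
        ((Finset.image p Finset.univ).orderEmbOfFin
          (hcard p (Finset.mem_filter.1 hp).2)).strictMono⟩, Finset.mem_univ _⟩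
    · intro q hq
      exact Finset.mem_filter.2 ⟨Finset.mem_univ _,
        ((Finset.mem_filter.1 (Finset.mem_product.1 hq).1).2.injective).comp q.2.injective⟩
    · intro p hp
      funext t
      simp only [Function.comp_apply, Equiv.ofBijective_apply,
        ← Finset.coe_orderIsoOfFin_apply, OrderIso.apply_symm_apply]
    · intro q hq
      obtain ⟨g, τ⟩ := q
      have hg : StrictMono g := (Finset.mem_filter.1 (Finset.mem_product.1 hq).1).2
      have hinj : Function.Injective (g ∘ ⇑τ) := hg.injective.comp τ.injective
      have hG : g = ⇑((Finset.image (g ∘ ⇑τ) Finset.univ).orderEmbOfFin (hcard _ hinj)) :=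
        Finset.orderEmbOfFin_unique (hcard _ hinj)
          (fun x => Finset.mem_image.2 ⟨τ.symm x, Finset.mem_univ _, by simp⟩) hg
      refine Prod.ext hG.symm ?_
      refine Equiv.ext fun t => ?_
      show ((Finset.image (g ∘ ⇑τ) Finset.univ).orderIsoOfFin (hcard _ hinj)).symm
          ⟨(g ∘ ⇑τ) t, _⟩ = τ t
      rw [OrderIso.symm_apply_eq]
      apply Subtype.ext
      rw [Finset.coe_orderIsoOfFin_apply]
      exact congrFun hG (τ t)
    · intro p hp
      simp only [Function.comp_apply, Equiv.ofBijective_apply,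
        ← Finset.coe_orderIsoOfFin_apply, OrderIso.apply_symm_apply]
  rw [step1, Finset.sum_product]
  refine Finset.sum_congr rfl fun g hg => ?_
  rw [← det_mul (M.submatrix id g) (N.submatrix g id), det_mul_perm]
  rfl

open scoped Classical in
private theorem key_ineq {k n : ℕ} (M : Matrix (Fin k) (Fin n) ℂ) (μ : Fin n → ℝ)
    (hμ : Antitone μ) (hμ0 : ∀ s, 0 ≤ μ s) (i : Fin k → Fin n) (hi : Monotone i)
    (hMM : M * Mᴴ = 1) (hMz : ∀ t r, i t < r → M t r = 0) :
    ((M * (Matrix.diagonal (fun s => (μ s : ℂ)) * Mᴴ)).det).re ≥ ∏ t, μ (i t) := by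
  -- zero-pattern kills determinants of bad submatrices
  have hg0 : ∀ (g : Fin k → Fin n), StrictMono g → ∀ t, i t < g t →
      (M.submatrix id g).det = 0 := by
    intro g hg t ht
    rw [Matrix.det_apply']
    refine Finset.sum_eq_zero fun σ _ => ?_
    obtain ⟨r, hr1, hr2⟩ : ∃ r : Fin k, t ≤ r ∧ σ r ≤ t := by
      by_contra hcon
      push_neg at hcon
      have hsub : Finset.Ioi t ⊂ Finset.Ici t := by
        rw [Finset.ssubset_iff_of_subset Finset.Ioi_subset_Ici_self]
        exact ⟨t, Finset.mem_Ici.2 le_rfl, by simp⟩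
      have h1 : (Finset.Ici t).card ≤ (Finset.Ioi t).card :=
        Finset.card_le_card_of_injOn σ
          (fun r hr => Finset.mem_Ioi.2 (hcon r (Finset.mem_Ici.1 hr)))
          σ.injective.injOn
      exact absurd h1 (not_le.2 (Finset.card_lt_card hsub))
    refine mul_eq_zero_of_right _ (Finset.prod_eq_zero (Finset.mem_univ r) ?_)
    rw [Matrix.submatrix_apply]
    exact hMz (σ r) (g r)
      (lt_of_le_of_lt (hi hr2) (lt_of_lt_of_le ht (hg.monotone hr1)))
  have hre : ∀ g : Fin k → Fin n,
      (M.submatrix id g).det *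
        ((Matrix.diagonal (fun s => (μ s : ℂ)) * Mᴴ).submatrix g id).det
      = (((∏ a, μ (g a)) * Complex.normSq (M.submatrix id g).det : ℝ) : ℂ) := by
    intro g
    have hDsub : (Matrix.diagonal (fun s => (μ s : ℂ)) * Mᴴ).submatrix g id
        = Matrix.diagonal (fun a => (μ (g a) : ℂ)) * (M.submatrix id g)ᴴ := by
      ext a b
      simp [Matrix.submatrix_apply, Matrix.diagonal_mul, Matrix.conjTranspose_apply]
    rw [hDsub, Matrix.det_mul, Matrix.det_diagonal, Matrix.det_conjTranspose]
    push_cast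
    rw [show star (M.submatrix id g).det
        = (starRingEnd ℂ) (M.submatrix id g).det from rfl]
    calc (M.submatrix id g).det *
          ((∏ a, (μ (g a) : ℂ)) * (starRingEnd ℂ) (M.submatrix id g).det)
        = (∏ a, (μ (g a) : ℂ)) *
            ((M.submatrix id g).det * (starRingEnd ℂ) (M.submatrix id g).det) := by ring
      _ = _ := by rw [Complex.mul_conj]
  have hterm2 : ∀ g : Fin k → Fin n,
      (M.submatrix id g).det * (Mᴴ.submatrix g id).det
        = ((Complex.normSq (M.submatrix id g).det : ℝ) : ℂ) := by
    intro g
    rw [← Matrix.conjTranspose_submatrix, Matrix.det_conjTranspose]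
    exact Complex.mul_conj _
  have h5 := det_mul_rect M Mᴴ
  rw [hMM, Matrix.det_one, Finset.sum_congr rfl fun g _ => hterm2 g,
    ← Complex.ofReal_sum] at h5
  have hnorm : (∑ g ∈ Finset.univ.filter (fun g : Fin k → Fin n => StrictMono g),
      Complex.normSq (M.submatrix id g).det) = 1 := by exact_mod_cast h5.symm
  rw [det_mul_rect, Finset.sum_congr rfl fun g _ => hre g, ← Complex.ofReal_sum,
    Complex.ofReal_re, ge_iff_le, ← mul_one (∏ t, μ (i t)), ← hnorm, Finset.mul_sum]
  refine Finset.sum_le_sum fun g hg => ?_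
  by_cases hdg : (M.submatrix id g).det = 0
  · simp [hdg]
  · have hgSM : StrictMono g := (Finset.mem_filter.1 hg).2
    have hle : ∀ t, g t ≤ i t := fun t => not_lt.1 fun hlt => hdg (hg0 g hgSM t hlt)
    exact mul_le_mul_of_nonneg_right
      (Finset.prod_le_prod (fun a _ => hμ0 (i a)) (fun a _ => hμ (hle a)))
      (Complex.normSq_nonneg _)

open scoped ComplexOrder

theorem det_compression_ge_prod_eigenvalues (n k : ℕ) (hk : 0 < k)
    (A : Matrix (Fin n) (Fin n) ℂ) (hA : A.PosSemidef)
    (μ : Fin n → ℝ) (hμ : Antitone μ)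
    (u : Fin n → (Fin n → ℂ))
    (hu_on : ∀ s t, star (u s) ⬝ᵥ u t = if s = t then 1 else 0)
    (hu_eig : ∀ t, A.mulVec (u t) = (μ t : ℂ) • u t)
    (i : Fin k → Fin n) (hi : StrictMono i)
    (x : Fin k → (Fin n → ℂ))
    (hx_on : ∀ s t, star (x s) ⬝ᵥ x t = if s = t then 1 else 0)
    (hx_span : ∀ t, x t ∈ Submodule.span ℂ (u '' {s : Fin n | s ≤ i t})) :
    (((Matrix.of fun (r : Fin n) (t : Fin k) => x t r)ᴴ * A *
        (Matrix.of fun (r : Fin n) (t : Fin k) => x t r)).det).re ≥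
      ∏ t, μ (i t) := by
  classical
  set X : Matrix (Fin n) (Fin k) ℂ := Matrix.of fun (r : Fin n) (t : Fin k) => x t r with hX
  set U : Matrix (Fin n) (Fin n) ℂ := Matrix.of fun (r s : Fin n) => u s r with hU
  have hUU : Uᴴ * U = 1 := by
    ext s t
    have h := hu_on s t
    simp only [dotProduct, Pi.star_apply] at h
    simp only [Matrix.mul_apply, Matrix.conjTranspose_apply, hU, Matrix.of_apply,
      Matrix.one_apply]
    exact h
  have hUUc : U * Uᴴ = 1 := mul_eq_one_comm.mp hUU
  have hXX : Xᴴ * X = 1 := by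
    ext s t
    have h := hx_on s t
    simp only [dotProduct, Pi.star_apply] at h
    simp only [Matrix.mul_apply, Matrix.conjTranspose_apply, hX, Matrix.of_apply,
      Matrix.one_apply]
    exact h
  have hAU : A * U = U * Matrix.diagonal (fun s => (μ s : ℂ)) := by
    ext r t
    have h := congrFun (hu_eig t) r
    simp only [Matrix.mulVec, dotProduct, Pi.smul_apply, smul_eq_mul] at h
    rw [Matrix.mul_diagonal]
    simp only [Matrix.mul_apply, hU, Matrix.of_apply]
    exact h.trans (mul_comm _ _)
  set M : Matrix (Fin k) (Fin n) ℂ := Xᴴ * U with hM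
  have hMz : ∀ t r, i t < r → M t r = 0 := by
    intro t r hr
    have hfun : ∀ v ∈ u '' {s : Fin n | s ≤ i t}, star (u r) ⬝ᵥ v = 0 := by
      rintro v ⟨s, hs, rfl⟩
      rw [hu_on r s, if_neg]
      intro h
      rw [← h] at hs
      exact absurd hs (not_le.2 hr)
    have hφ : star (u r) ⬝ᵥ x t = 0 := by
      have hspan := hx_span t
      let φ : (Fin n → ℂ) →ₗ[ℂ] ℂ :=
        { toFun := fun v => star (u r) ⬝ᵥ v
          map_add' := fun a b => dotProduct_add _ a b
          map_smul' := fun c a => dotProduct_smul c _ a }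
      have hle : Submodule.span ℂ (u '' {s : Fin n | s ≤ i t}) ≤ LinearMap.ker φ := by
        rw [Submodule.span_le]
        intro v hv
        exact LinearMap.mem_ker.2 (hfun v hv)
      exact LinearMap.mem_ker.1 (hle hspan)
    have hMtr : M t r = (starRingEnd ℂ) (star (u r) ⬝ᵥ x t) := by
      simp only [hM, Matrix.mul_apply, Matrix.conjTranspose_apply, hX, hU, Matrix.of_apply,
        dotProduct, Pi.star_apply, _root_.map_sum]
      refine Finset.sum_congr rfl fun m _ => ?_
      simp only [_root_.map_mul, Complex.conj_conj, RCLike.star_def]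
      exact mul_comm _ _
    rw [hMtr, hφ, map_zero]
  have hμ0 : ∀ s, 0 ≤ μ s := by
    intro s
    have h1 := hA.dotProduct_mulVec_nonneg (u s)
    rw [hu_eig s, dotProduct_smul, hu_on s s, if_pos rfl, smul_eq_mul, mul_one] at h1
    exact Complex.zero_le_real.1 h1
  have hAeq : A = U * Matrix.diagonal (fun s => (μ s : ℂ)) * Uᴴ := by
    calc A = A * (U * Uᴴ) := by rw [hUUc, Matrix.mul_one]
    _ = A * U * Uᴴ := by rw [Matrix.mul_assoc]
    _ = U * Matrix.diagonal (fun s => (μ s : ℂ)) * Uᴴ := by rw [hAU]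
  have hMM : M * Mᴴ = 1 := by
    rw [hM, Matrix.conjTranspose_mul, Matrix.conjTranspose_conjTranspose]
    have h2 : U * (Uᴴ * X) = X := by rw [← Matrix.mul_assoc, hUUc, Matrix.one_mul]
    rw [Matrix.mul_assoc, h2, hXX]
  have hGoal : Xᴴ * A * X = M * (Matrix.diagonal (fun s => (μ s : ℂ)) * Mᴴ) := by
    rw [hAeq, hM, Matrix.conjTranspose_mul, Matrix.conjTranspose_conjTranspose]
    simp only [Matrix.mul_assoc]
  rw [hGoal]
  exact key_ineq M μ hμ hμ0 i hi.monotone hMM hMz
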